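/- Let B = ⊕_α B_α be a c₀-direct sum of C*-algebras and let E be a Hilbert B-module. Then E decomposes uniquely as a c₀-direct sum E = ⊕_α E_α, where E_α = E·B_α is a Hilbert B_α-module; distinct summands are orthogonal, and the inner product of two elements of E_α lies in B_α. -/

import Mathlib

open scoped RightActions

/-- The right Hilbert C⋆-module class as it stood in the older Mathlib (right action via
`Aᵐᵒᵖ`); the current Mathlib `CStarModule` uses a left action instead. -/
class CStarModuleRight (A E : Type*) [NonUnitalSemiring A] [StarRing A] [Module ℂ A]
    [AddCommGroup E] [Module ℂ E] [PartialOrder A] [SMul Aᵐᵒᵖ E] [Norm A] [Norm E]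
    extends Inner A E where
  inner_add_right {x} {y} {z} : inner x (y + z) = inner x y + inner x z
  inner_self_nonneg {x} : 0 ≤ inner x x
  inner_self {x} : inner x x = 0 ↔ x = 0
  inner_op_smul_right {a : A} {x y : E} : inner x (y <• a) = inner x y * a
  inner_smul_right_complex {z : ℂ} {x} {y} : inner x (z • y) = z • inner x y
  star_inner x y : star (inner x y) = inner y x
  norm_eq_sqrt_norm_inner_self x : ‖x‖ = √‖inner x x‖


namespace CStarModuleRight

section Aux

variable {A E : Type*} [NonUnitalCStarAlgebra A] [PartialOrder A]
  [NormedAddCommGroup E] [NormedSpace ℂ E] [SMul Aᵐᵒᵖ E] [CStarModuleRight A E]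

attribute [simp] CStarModuleRight.inner_add_right CStarModuleRight.star_inner
  CStarModuleRight.inner_op_smul_right CStarModuleRight.inner_smul_right_complex

@[simp]
lemma inner_add_left {x y z : E} : inner A (x + y) z = inner A x z + inner A y z := by
  rw [← star_star (r := inner A (x + y) z)]
  simp only [inner_add_right, star_add, star_inner]

@[simp]
lemma inner_op_smul_left {a : A} {x y : E} : inner A (x <• a) y = star a * inner A x y := by
  rw [← star_inner]; simp

@[simp]
lemma inner_smul_left_complex {z : ℂ} {x y : E} : inner A (z • x) y = star z • inner A x y := by
  rw [← star_inner]; simp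

@[simp]
lemma inner_zero_right {x : E} : inner A x 0 = 0 := by
  have h := inner_add_right (A := A) (x := x) (y := 0) (z := 0)
  rw [add_zero] at h
  simpa using h

@[simp]
lemma inner_neg_right {x y : E} : inner A x (-y) = -inner A x y := by
  have h : inner A x (-y) + inner A x y = 0 := by
    rw [← inner_add_right, neg_add_cancel, inner_zero_right]
  exact eq_neg_of_add_eq_zero_left h

@[simp]
lemma inner_sub_right {x y z : E} : inner A x (y - z) = inner A x y - inner A x z := by
  rw [sub_eq_add_neg, inner_add_right, inner_neg_right, ← sub_eq_add_neg]

@[simp]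
lemma inner_sub_left {x y z : E} : inner A (x - y) z = inner A x z - inner A y z := by
  rw [← star_inner, inner_sub_right, star_sub, star_inner, star_inner]

@[simp]
lemma inner_zero_left {x : E} : inner A 0 x = 0 := by
  rw [← star_inner, inner_zero_right, star_zero]

lemma norm_sq_eq {x : E} : ‖x‖ ^ 2 = ‖inner A x x‖ := by
  rw [norm_eq_sqrt_norm_inner_self (A := A) x, Real.sq_sqrt (norm_nonneg _)]

noncomputable instance opCStarModule : CStarModule Aᵐᵒᵖ E where
  inner x y := MulOpposite.op (inner A x y)
  inner_add_right := fun {x y z} => by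
    show MulOpposite.op (inner A x (y + z)) = MulOpposite.op (inner A x y) + MulOpposite.op (inner A x z)
    rw [inner_add_right, MulOpposite.op_add]
  inner_self_nonneg := fun {x} => by
    show MulOpposite.unop 0 ≤ inner A x x
    exact inner_self_nonneg
  inner_self := fun {x} => by
    show MulOpposite.op (inner A x x) = 0 ↔ x = 0
    rw [MulOpposite.op_eq_zero_iff]; exact inner_self
  inner_op_smul_right := fun {a x y} => by
    show MulOpposite.op (inner A x (y <• a.unop)) = a * MulOpposite.op (inner A x y)
    rw [inner_op_smul_right, MulOpposite.op_mul, MulOpposite.op_unop]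
  inner_smul_right_complex := fun {z x y} => by
    show MulOpposite.op (inner A x (z • y)) = z • MulOpposite.op (inner A x y)
    rw [inner_smul_right_complex, MulOpposite.op_smul]
  star_inner x y := by
    show star (MulOpposite.op (inner A x y)) = MulOpposite.op (inner A y x)
    rw [← MulOpposite.op_star, star_inner]
  norm_eq_sqrt_norm_inner_self x := by
    show ‖x‖ = √‖MulOpposite.op (inner A x x)‖
    rw [MulOpposite.norm_op]; exact norm_eq_sqrt_norm_inner_self x

variable [StarOrderedRing A]

lemma norm_inner_le {x y : E} : ‖inner A x y‖ ≤ ‖x‖ * ‖y‖ :=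
  CStarModule.norm_inner_le (A := Aᵐᵒᵖ) E (x := x) (y := y)

/-- The map `y ↦ ⟪x, y⟫` as a continuous linear map. -/
noncomputable def innerSL (x : E) : E →L[ℂ] A :=
  LinearMap.mkContinuous
    { toFun := fun y => inner A x y
      map_add' := fun _ _ => inner_add_right
      map_smul' := fun _ _ => by simp } ‖x‖
    (fun _ => norm_inner_le)

lemma continuous_inner_left (y : E) : Continuous fun x : E => inner A x y :=
  (continuous_star.comp (innerSL (A := A) y).continuous).congr fun x => star_inner y x

end Aux

end CStarModuleRight

namespace Stmt19Aux

variable {B : Type*} [NonUnitalCStarAlgebra B] [PartialOrder B] [StarOrderedRing B]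
  {E : Type*} [NormedAddCommGroup E] [NormedSpace ℂ E] [SMul Bᵐᵒᵖ E] [CStarModuleRight B E]

lemma ext_inner_left {u v : E} (h : ∀ z : E, (inner B z u : B) = inner B z v) : u = v := by
  have h2 : (inner B (u - v) (u - v) : B) = 0 := by
    rw [CStarModuleRight.inner_sub_right, h (u - v), sub_self]
  exact sub_eq_zero.mp (CStarModuleRight.inner_self.mp h2)

lemma op_smul_add (b : B) (x y : E) : (x + y) <• b = x <• b + y <• b :=
  ext_inner_left (B := B) fun z => by simp [add_mul]

lemma op_smul_csmul (b : B) (c : ℂ) (x : E) : (c • x) <• b = c • (x <• b) :=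
  ext_inner_left (B := B) fun z => by simp [smul_mul_assoc]

lemma add_op_smul (x : E) (a b : B) : x <• (a + b) = x <• a + x <• b :=
  ext_inner_left (B := B) fun z => by
    simp only [CStarModuleRight.inner_op_smul_right, CStarModuleRight.inner_add_right, mul_add]

lemma csmul_op_smul (x : E) (c : ℂ) (b : B) : x <• (c • b) = c • (x <• b) :=
  ext_inner_left (B := B) fun z => by
    simp only [CStarModuleRight.inner_op_smul_right, CStarModuleRight.inner_smul_right_complex,
      mul_smul_comm]

lemma op_smul_op_smul (x : E) (a b : B) : (x <• a) <• b = x <• (a * b) :=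
  ext_inner_left (B := B) fun z => by
    simp only [CStarModuleRight.inner_op_smul_right, mul_assoc]

lemma norm_op_smul_le (x : E) (b : B) : ‖x <• b‖ ≤ ‖x‖ * ‖b‖ := by
  have h : ‖x <• b‖ ^ 2 ≤ (‖x‖ * ‖b‖) ^ 2 := by
    rw [CStarModuleRight.norm_sq_eq (A := B)]
    have h1 : (inner B (x <• b) (x <• b) : B) = star b * (inner B x x : B) * b := by
      simp [mul_assoc]
    rw [h1]
    calc ‖star b * (inner B x x : B) * b‖ ≤ ‖star b * (inner B x x : B)‖ * ‖b‖ := norm_mul_le _ _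
      _ ≤ ‖star b‖ * ‖(inner B x x : B)‖ * ‖b‖ := by gcongr; exact norm_mul_le _ _
      _ = ‖b‖ * ‖x‖ ^ 2 * ‖b‖ := by rw [norm_star, CStarModuleRight.norm_sq_eq (A := B)]
      _ = (‖x‖ * ‖b‖) ^ 2 := by ring
  exact (pow_le_pow_iff_left₀ (norm_nonneg _) (by positivity) (by norm_num)).mp h

/-- Right multiplication by `b` as a continuous linear map. -/
noncomputable def opSmulCLM (b : B) (E : Type*) [NormedAddCommGroup E] [NormedSpace ℂ E]
    [SMul Bᵐᵒᵖ E] [CStarModuleRight B E] : E →L[ℂ] E :=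
  LinearMap.mkContinuous
    { toFun := fun x => x <• b
      map_add' := fun x y => op_smul_add b x y
      map_smul' := fun c x => op_smul_csmul b c x } ‖b‖
    (fun x => by rw [mul_comm]; exact norm_op_smul_le x b)

@[simp] lemma opSmulCLM_apply (b : B) (x : E) : opSmulCLM b E x = x <• b := rfl

/-- The map `b ↦ x <• b` as a continuous linear map. -/
noncomputable def smulLeftCLM (x : E) : B →L[ℂ] E :=
  LinearMap.mkContinuous
    { toFun := fun b => x <• b
      map_add' := fun a b => add_op_smul x a b
      map_smul' := fun c b => csmul_op_smul x c b } ‖x‖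
    (fun b => norm_op_smul_le x b)

@[simp] lemma smulLeftCLM_apply (x : E) (b : B) : smulLeftCLM x b = x <• b := rfl

lemma contSub {f g : ℝ → ℝ} {s : Set ℝ} (hf : ContinuousOn f s) (hg : ContinuousOn g s) :
    ContinuousOn (fun x => f x - g x) s := hf.sub hg

lemma key_cfc (a : B) (ha : 0 ≤ a) (n : ℕ) (hn : 0 < n) :
    ∃ c : B, star c = c ∧ c = (n : ℝ) • a - (n : ℝ) • (a * c) ∧
      ‖a - a * c - c * a + c * (a * c)‖ ≤ 1 / n := by
  have hsa : IsSelfAdjoint a := ha.isSelfAdjoint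
  have hσ : ∀ s ∈ quasispectrum ℝ a, 0 ≤ s := quasispectrum_nonneg_of_nonneg a ha
  set f : ℝ → ℝ := fun s => (n : ℝ) * s / ((n : ℝ) * s + 1) with hf_def
  have hpos : ∀ s ∈ quasispectrum ℝ a, 0 < (n : ℝ) * s + 1 := fun s hs => by
    have h1 : 0 ≤ (n : ℝ) * s := mul_nonneg (by positivity) (hσ s hs)
    linarith
  have hf : ContinuousOn f (quasispectrum ℝ a) :=
    ContinuousOn.div (by fun_prop) (by fun_prop) (fun s hs => (hpos s hs).ne')
  have hf0 : f 0 = 0 := by simp [hf_def]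
  set c : B := cfcₙ f a with hc_def
  have hcsa : IsSelfAdjoint c := cfcₙ_predicate f a
  refine ⟨c, hcsa.star_eq, ?_, ?_⟩
  · -- c = n • a - n • (a * c)
    have h1 : cfcₙ f a = cfcₙ (fun s => (n : ℝ) * s - (n : ℝ) * (s * f s)) a := by
      apply cfcₙ_congr
      intro s hs
      have := (hpos s hs).ne'
      rw [hf_def]
      field_simp
      ring
    have h2 : cfcₙ (fun s => (n : ℝ) * s - (n : ℝ) * (s * f s)) a
        = cfcₙ (fun s : ℝ => (n : ℝ) * s) a - cfcₙ (fun s => (n : ℝ) * (s * f s)) a :=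
      cfcₙ_sub _ _ a (by fun_prop) (by simp)
        (by fun_prop (disch := exact fun s hs => (hpos s hs).ne')) (by simp [hf0])
    have h3 : cfcₙ (fun s : ℝ => (n : ℝ) * s) a = (n : ℝ) • a := by
      rw [cfcₙ_const_mul (n : ℝ) _ a (by fun_prop) (by simp), cfcₙ_id' ℝ a]
    have h4 : cfcₙ (fun s => (n : ℝ) * (s * f s)) a = (n : ℝ) • (a * c) := by
      rw [cfcₙ_const_mul (n : ℝ) _ a
        (by fun_prop (disch := exact fun s hs => (hpos s hs).ne')) (by simp [hf0])]
      congr 1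
      rw [cfcₙ_mul _ _ a (by fun_prop) (by simp) hf hf0, cfcₙ_id' ℝ a]
    conv_lhs => rw [hc_def, h1, h2, h3, h4]
  · -- norm bound
    have hd : ∀ s ∈ quasispectrum ℝ a, ((n : ℝ) * s + 1) ≠ 0 := fun s hs => (hpos s hs).ne'
    have hsf : ContinuousOn (fun s => s * f s) (quasispectrum ℝ a) := by
      fun_prop (disch := exact fun s hs => hd s hs)
    have hfs : ContinuousOn (fun s => f s * s) (quasispectrum ℝ a) := by
      fun_prop (disch := exact fun s hs => hd s hs)
    have hfsf : ContinuousOn (fun s => f s * (s * f s)) (quasispectrum ℝ a) := by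
      fun_prop (disch := exact fun s hs => hd s hs)
    have t1 : cfcₙ (fun s => s * f s) a = a * c := by
      rw [cfcₙ_mul _ _ a (by fun_prop) (by simp) hf hf0, cfcₙ_id' ℝ a]
    have t2 : cfcₙ (fun s => f s * s) a = c * a := by
      rw [cfcₙ_mul _ _ a hf hf0 (by fun_prop) (by simp), cfcₙ_id' ℝ a]
    have t3 : cfcₙ (fun s => f s * (s * f s)) a = c * (a * c) := by
      rw [cfcₙ_mul _ _ a hf hf0 hsf (by simp [hf0]), t1]
    have h5 : a - a * c - c * a + c * (a * c)
        = cfcₙ (fun s => s - s * f s - f s * s + f s * (s * f s)) a := by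
      rw [cfcₙ_add _ _ a (contSub (contSub (by fun_prop) hsf) hfs) (by simp [hf0]) hfsf
        (by simp [hf0])]
      rw [cfcₙ_sub _ _ a (contSub (by fun_prop) hsf) (by simp [hf0]) hfs (by simp [hf0])]
      rw [cfcₙ_sub _ _ a (by fun_prop) (by simp) hsf (by simp [hf0])]
      rw [cfcₙ_id' ℝ a, t1, t2, t3]
    rw [h5]
    apply norm_cfcₙ_le
    intro s hs
    have hs0 := hσ s hs
    have hp := hpos s hs
    have key : s - s * f s - f s * s + f s * (s * f s) = s / (((n : ℝ) * s + 1) ^ 2) := by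
      rw [hf_def]
      field_simp
      ring
    rw [key, Real.norm_eq_abs, abs_of_nonneg (by positivity)]
    rw [div_le_div_iff₀ (by positivity) (by positivity)]
    nlinarith [sq_nonneg ((n : ℝ) * s), mul_nonneg (Nat.cast_nonneg (α := ℝ) n) hs0]

lemma approx_mem (x : E) (n : ℕ) (hn : 0 < n) :
    ∃ c : B,
      (∀ J : Submodule ℂ B, (∀ b : B, ∀ z ∈ J, z * b ∈ J) → (inner B x x : B) ∈ J → c ∈ J) ∧
      ‖x - x <• c‖ ^ 2 ≤ 1 / n := by
  obtain ⟨c, hcsa, hc_eq, hbound⟩ :=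
    key_cfc (inner B x x : B) CStarModuleRight.inner_self_nonneg n hn
  refine ⟨c, ?_, ?_⟩
  · intro J hJr haJ
    rw [hc_eq]
    apply sub_mem
    · rw [Nat.cast_smul_eq_nsmul]; exact nsmul_mem haJ n
    · rw [Nat.cast_smul_eq_nsmul]; exact nsmul_mem (hJr c _ haJ) n
  · have hexp : (inner B (x - x <• c) (x - x <• c) : B)
        = (inner B x x : B) - (inner B x x : B) * c - c * (inner B x x : B)
          + c * ((inner B x x : B) * c) := by
      simp only [CStarModuleRight.inner_sub_right, CStarModuleRight.inner_sub_left,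
        CStarModuleRight.inner_op_smul_right, CStarModuleRight.inner_op_smul_left, hcsa]
      noncomm_ring
    rw [CStarModuleRight.norm_sq_eq (A := B), hexp]
    exact hbound

lemma mem_closure_of_approx {x : E} {S : Set E}
    (h : ∀ n : ℕ, 0 < n → ∃ y ∈ S, ‖x - y‖ ^ 2 ≤ 1 / n) : x ∈ closure S := by
  rw [Metric.mem_closure_iff]
  intro ε hε
  obtain ⟨n, hn⟩ := exists_nat_gt (max 1 (1 / ε ^ 2))
  have hn1 : (1 : ℝ) < n := lt_of_le_of_lt (le_max_left _ _) hn
  have hn0 : 0 < n := by exact_mod_cast lt_trans one_pos hn1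
  obtain ⟨y, hyS, hy⟩ := h n hn0
  refine ⟨y, hyS, ?_⟩
  rw [dist_eq_norm]
  have h2 : 1 / (n : ℝ) < ε ^ 2 := by
    rw [div_lt_iff₀ (by positivity)]
    have h3 := lt_of_le_of_lt (le_max_right 1 (1 / ε ^ 2)) hn
    rw [div_lt_iff₀ (by positivity)] at h3
    nlinarith
  nlinarith [norm_nonneg (x - y)]

end Stmt19Aux

/-- Let `B = ⊕_α B_α` be a c₀-direct sum of C*-algebras (modelled by a C*-algebra `B`
together with a family of pairwise orthogonal closed two-sided ideals `I α` whose sum is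
dense), and let `E` be a Hilbert `B`-module.  Then `E` decomposes uniquely as the direct
sum of the closed submodules `E_α = E·B_α`: the `E_α` are pairwise orthogonal, the inner
product of two elements of `E_α` lies in `I α`, their sum is dense in `E`, and any family
of closed invariant submodules with these properties coincides with `(E_α)`. -/
theorem stmt_19 {B : Type*} [NonUnitalCStarAlgebra B] [PartialOrder B] [StarOrderedRing B]
    {E : Type*} [NormedAddCommGroup E] [NormedSpace ℂ E] [SMul Bᵐᵒᵖ E] [CStarModuleRight B E]
    [CompleteSpace E]
    {ι : Type*} (I : ι → Submodule ℂ B)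
    (hIclosed : ∀ α, IsClosed ((I α : Set B)))
    (hIleft : ∀ α, ∀ b : B, ∀ x ∈ I α, b * x ∈ I α)
    (hIright : ∀ α, ∀ b : B, ∀ x ∈ I α, x * b ∈ I α)
    (hIorth : ∀ α β, α ≠ β → ∀ x ∈ I α, ∀ y ∈ I β, x * y = 0)
    (hIdense : (⨆ α, I α).topologicalClosure = ⊤)
    (Eα : ι → Submodule ℂ E)
    (hEα : ∀ α, Eα α = (Submodule.span ℂ
      {x : E | ∃ (e : E) (b : B), b ∈ I α ∧ x = e <• b}).topologicalClosure) :
    -- the summands fill out `E` densely,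
    (⨆ α, Eα α).topologicalClosure = ⊤ ∧
    -- distinct summands are orthogonal,
    (∀ α β, α ≠ β → ∀ x ∈ Eα α, ∀ y ∈ Eα β, (inner B x y : B) = 0) ∧
    -- the inner product of two elements of `E_α` lies in `B_α`,
    (∀ α, ∀ x ∈ Eα α, ∀ y ∈ Eα α, (inner B x y : B) ∈ I α) ∧
    -- each `E_α` is invariant under the `B`-action (a Hilbert `B_α`-module),
    (∀ α, ∀ x ∈ Eα α, ∀ b : B, x <• b ∈ Eα α) ∧
    -- and the decomposition is unique:
    (∀ F : ι → Submodule ℂ E,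
      (∀ α, IsClosed ((F α : Set E))) →
      (∀ α, ∀ x ∈ F α, ∀ b : B, x <• b ∈ F α) →
      (⨆ α, F α).topologicalClosure = ⊤ →
      (∀ α β, α ≠ β → ∀ x ∈ F α, ∀ y ∈ F β, (inner B x y : B) = 0) →
      (∀ α, ∀ x ∈ F α, ∀ y ∈ F α, (inner B x y : B) ∈ I α) →
      ∀ α, F α = Eα α) := by
  classical
  -- closedness of the `Eα`
  have hEclosed : ∀ α, IsClosed ((Eα α : Set E)) := fun α => by
    rw [hEα α]; exact Submodule.isClosed_topologicalClosure _
  -- generators belong to `Eα`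
  have hgen : ∀ α (e : E) (b : B), b ∈ I α → e <• b ∈ Eα α := fun α e b hb => by
    rw [hEα α]
    exact Submodule.le_topologicalClosure _ (Submodule.subset_span ⟨e, b, hb, rfl⟩)
  -- Lemma A : inner products with elements of `Eα` land in `I α`
  have lemA : ∀ α (x : E), ∀ y ∈ Eα α, (inner B x y : B) ∈ I α := by
    intro α x y hy
    rw [hEα α] at hy
    have key : (Submodule.span ℂ
        {x' : E | ∃ (e : E) (b : B), b ∈ I α ∧ x' = e <• b}).topologicalClosure ≤
        (I α).comap (CStarModuleRight.innerSL (A := B) x).toLinearMap := by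
      refine Submodule.topologicalClosure_minimal _ (Submodule.span_le.mpr ?_) ?_
      · rintro _ ⟨e, b, hb, rfl⟩
        show (inner B x (e <• b) : B) ∈ I α
        rw [CStarModuleRight.inner_op_smul_right]
        exact hIleft α _ b hb
      · exact (hIclosed α).preimage (CStarModuleRight.innerSL (A := B) x).continuous
    exact key hy
  -- orthogonality
  have lemOrth : ∀ α β, α ≠ β → ∀ y ∈ Eα β, ∀ x ∈ Eα α, (inner B x y : B) = 0 := by
    intro α β hne y hy
    have hScl : IsClosed {x : E | (inner B x y : B) = 0} := by
      have hcont : Continuous fun x : E => (inner B x y : B) :=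
        CStarModuleRight.continuous_inner_left y
      exact isClosed_eq hcont continuous_const
    set S : Submodule ℂ E :=
      { carrier := {x : E | (inner B x y : B) = 0}
        add_mem' := fun {u v} hu hv => by
          simp only [Set.mem_setOf_eq] at hu hv ⊢
          rw [CStarModuleRight.inner_add_left, hu, hv, add_zero]
        zero_mem' := by simp
        smul_mem' := fun c u hu => by
          simp only [Set.mem_setOf_eq] at hu ⊢
          rw [CStarModuleRight.inner_smul_left_complex, hu, smul_zero] } with hS
    intro x hx
    have key : Eα α ≤ S := by
      rw [hEα α]
      refine Submodule.topologicalClosure_minimal _ (Submodule.span_le.mpr ?_) hScl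
      rintro _ ⟨e, b, hb, rfl⟩
      show (inner B (e <• b) y : B) = 0
      have hm : (inner B e y : B) ∈ I β := lemA β e y hy
      rw [CStarModuleRight.inner_op_smul_left]
      have hz : star (star b * (inner B e y : B)) * (star b * (inner B e y : B)) = 0 := by
        rw [star_mul, star_star, mul_assoc, ← mul_assoc b,
          hIorth α β hne _ (hIright α (star b) b hb) _ hm, mul_zero]
      exact (CStarRing.star_mul_self_eq_zero_iff _).mp hz
    exact key hx
  -- invariance
  have lemInv : ∀ α, ∀ x ∈ Eα α, ∀ b : B, x <• b ∈ Eα α := by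
    intro α x hx b
    have key : Eα α ≤ (Eα α).comap (Stmt19Aux.opSmulCLM b E).toLinearMap := by
      conv_lhs => rw [hEα α]
      refine Submodule.topologicalClosure_minimal _ (Submodule.span_le.mpr ?_) ?_
      · rintro _ ⟨e, c, hc, rfl⟩
        show (e <• c) <• b ∈ Eα α
        rw [Stmt19Aux.op_smul_op_smul]
        exact hgen α e (c * b) (hIright α b c hc)
      · exact (hEclosed α).preimage (Stmt19Aux.opSmulCLM b E).continuous
    exact key hx
  -- density
  have lemDense : (⨆ α, Eα α).topologicalClosure = ⊤ := by
    rw [Submodule.eq_top_iff']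
    intro x
    set M := (⨆ α, Eα α).topologicalClosure with hM
    have hMclosed : IsClosed (M : Set E) := Submodule.isClosed_topologicalClosure _
    have h1 : ∀ c : B, x <• c ∈ M := by
      intro c
      have key : (⊤ : Submodule ℂ B) ≤ M.comap (Stmt19Aux.smulLeftCLM x).toLinearMap := by
        rw [← hIdense]
        refine Submodule.topologicalClosure_minimal _ (iSup_le fun α => ?_) ?_
        · intro d hd
          show x <• d ∈ M
          exact Submodule.le_topologicalClosure _ ((le_iSup Eα α) (hgen α x d hd))
        · exact hMclosed.preimage (Stmt19Aux.smulLeftCLM x).continuous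
      exact key Submodule.mem_top
    have h2 : x ∈ closure (M : Set E) := by
      apply Stmt19Aux.mem_closure_of_approx
      intro n hn
      obtain ⟨c, hcJ, hb⟩ := Stmt19Aux.approx_mem (B := B) x n hn
      exact ⟨x <• c, h1 c, hb⟩
    rw [hMclosed.closure_eq] at h2
    exact h2
  refine ⟨lemDense, fun α β hne x hx y hy => lemOrth α β hne y hy x hx,
    fun α x _ y hy => lemA α x y hy, lemInv, ?_⟩
  -- uniqueness
  intro F hFclosed hFinv hFdense hForth hFmem α
  apply le_antisymm
  · -- F α ≤ Eα α
    intro f hf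
    have ha : (inner B f f : B) ∈ I α := hFmem α f hf f hf
    have h2 : f ∈ closure ((Eα α : Set E)) := by
      apply Stmt19Aux.mem_closure_of_approx
      intro n hn
      obtain ⟨c, hcJ, hb⟩ := Stmt19Aux.approx_mem (B := B) f n hn
      have hc : c ∈ I α := hcJ (I α) (fun b z hz => hIright α b z hz) ha
      exact ⟨f <• c, hgen α f c hc, hb⟩
    rw [(hEclosed α).closure_eq] at h2
    exact h2
  · -- Eα α ≤ F α
    rw [hEα α]
    refine Submodule.topologicalClosure_minimal _ (Submodule.span_le.mpr ?_) (hFclosed α)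
    rintro _ ⟨e, b, hb, rfl⟩
    have key : (⊤ : Submodule ℂ E) ≤ (F α).comap (Stmt19Aux.opSmulCLM b E).toLinearMap := by
      rw [← hFdense]
      refine Submodule.topologicalClosure_minimal _ (iSup_le fun β => ?_)
        ((hFclosed α).preimage (Stmt19Aux.opSmulCLM b E).continuous)
      intro z hz
      show z <• b ∈ F α
      by_cases hβ : β = α
      · subst hβ; exact hFinv β z hz b
      · have hz0 : (inner B (z <• b) (z <• b) : B) = 0 := by
          rw [CStarModuleRight.inner_op_smul_right, CStarModuleRight.inner_op_smul_left, mul_assoc,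
            hIorth β α hβ _ (hFmem β z hz z hz) b hb, mul_zero]
        have hzb : z <• b = 0 := CStarModuleRight.inner_self.mp hz0
        rw [hzb]
        exact zero_mem _
    exact key Submodule.mem_top
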